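/- Let R be a polynomial ring over a field and let I be a nonzero proper homogeneous ideal of R. Then for positive integers r and m, the r-th ordinary power I^r is contained in the m-th symbolic power I^(m) if and only if r ≥ m. -/

import Mathlib

open MvPolynomial

/-- The complement of the union of the associated primes of `R/I`. -/
def symbolicCompl {R : Type*} [CommRing R] (I : Ideal R) : Submonoid R where
  carrier := {r | ∀ P ∈ associatedPrimes R (R ⧸ I), r ∉ P}
  one_mem' := fun P hP h1 => hP.isPrime.ne_top (Ideal.eq_top_iff_one P |>.mpr h1)
  mul_mem' := by
    intro a b ha hb P hP hab
    rcases hP.isPrime.mem_or_mem hab with h | h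
    · exact ha P hP h
    · exact hb P hP h

/-- The `m`-th symbolic power of `I`. -/
noncomputable def symbolicPower {R : Type*} [CommRing R] (I : Ideal R) (m : ℕ) : Ideal R :=
  (Ideal.map (algebraMap R (Localization (symbolicCompl I))) (I ^ m)).comap
    (algebraMap R (Localization (symbolicCompl I)))

/-- A homogeneous ideal: one containing all homogeneous components of its elements. -/
def IsHomogIdeal {k : Type*} [Field k] {n : ℕ} (I : Ideal (MvPolynomial (Fin n) k)) : Prop :=
  ∀ f ∈ I, ∀ t : ℕ, MvPolynomial.homogeneousComponent t f ∈ I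

theorem aux_le_of_pow_le_symbolic {R : Type*} [CommRing R] [IsDomain R] [IsNoetherianRing R]
    (I : Ideal R) (hne : I ≠ ⊥) (hproper : I ≠ ⊤) (r m : ℕ) (hr : 0 < r)
    (h : I ^ r ≤ symbolicPower I m) : m ≤ r := by
  by_contra hlt
  push_neg at hlt
  haveI : Nontrivial (R ⧸ I) := Ideal.Quotient.nontrivial_iff.mpr hproper
  obtain ⟨P, hP⟩ := associatedPrimes.nonempty R (R ⧸ I)
  haveI hPprime : P.IsPrime := hP.isPrime
  -- I ≤ P
  have hIP : I ≤ P := by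
    obtain ⟨x, hx⟩ := (isAssociatedPrime_iff.mp hP).2
    intro a ha
    rw [hx, Submodule.mem_colon_singleton, Submodule.mem_bot]
    obtain ⟨y, rfl⟩ := Ideal.Quotient.mk_surjective x
    rw [Algebra.smul_def, Ideal.Quotient.algebraMap_eq,
      Ideal.Quotient.eq_zero_iff_mem.mpr ha, zero_mul]
  set L := Localization (symbolicCompl I)
  set RP := Localization P.primeCompl
  haveI : IsDomain RP := IsLocalization.isDomain_localization P.primeCompl_le_nonZeroDivisors
  haveI : IsNoetherianRing RP :=
    IsLocalization.isNoetherianRing P.primeCompl RP ‹IsNoetherianRing R›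
  have hle : symbolicCompl I ≤ P.primeCompl.comap (RingHom.id R) := fun s hs => hs P hP
  set g : L →+* RP := IsLocalization.map (M := symbolicCompl I) RP (RingHom.id R) hle with hg
  have key : Ideal.map (algebraMap R RP) (I ^ r) ≤ Ideal.map (algebraMap R RP) (I ^ m) := by
    rw [Ideal.map_le_iff_le_comap]
    intro x hx
    have h1 : algebraMap R L x ∈ Ideal.map (algebraMap R L) (I ^ m) := h hx
    have h2 : g (algebraMap R L x) ∈ Ideal.map g (Ideal.map (algebraMap R L) (I ^ m)) :=
      Ideal.mem_map_of_mem g h1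
    rw [Ideal.map_map, IsLocalization.map_comp, IsLocalization.map_eq] at h2
    simpa using h2
  set J := Ideal.map (algebraMap R RP) I with hJ
  rw [Ideal.map_pow, Ideal.map_pow] at key
  have h2 : J ^ r ≤ J • (J ^ r) := by
    refine key.trans ?_
    rw [smul_eq_mul, ← pow_succ']
    exact Ideal.pow_le_pow_right hlt
  have hJjac : J ≤ Ideal.jacobson ⊥ := by
    rw [IsLocalRing.jacobson_eq_maximalIdeal ⊥ bot_ne_top, Ideal.map_le_iff_le_comap]
    intro a ha
    rw [Ideal.mem_comap]
    exact (IsLocalization.AtPrime.to_map_mem_maximal_iff RP P a).mpr (hIP ha)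
  have hbot : J ^ r = ⊥ :=
    Submodule.eq_bot_of_le_smul_of_le_jacobson_bot J (J ^ r)
      (IsNoetherian.noetherian _) h2 hJjac
  obtain ⟨a, haI, ha0⟩ := Submodule.exists_mem_ne_zero_of_ne_bot hne
  have : (algebraMap R RP a) ^ r ∈ J ^ r :=
    Ideal.pow_mem_pow (Ideal.mem_map_of_mem _ haI) r
  rw [hbot, Ideal.mem_bot, pow_eq_zero_iff hr.ne'] at this
  exact ha0 (IsLocalization.injective RP P.primeCompl_le_nonZeroDivisors
    (by simpa using this))

/-- For a nonzero proper homogeneous ideal `I` in a polynomial ring over a field,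
`I^r ⊆ I^{(m)}` if and only if `r ≥ m`. -/
theorem power_le_symbolicPower_iff {k : Type*} [Field k] {N : ℕ}
    (I : Ideal (MvPolynomial (Fin (N + 1)) k))
    (hne : I ≠ ⊥) (hproper : I ≠ ⊤) (hhom : IsHomogIdeal I)
    (r m : ℕ) (hr : 0 < r) (hm : 0 < m) :
    I ^ r ≤ symbolicPower I m ↔ m ≤ r := by
  constructor
  · exact aux_le_of_pow_le_symbolic I hne hproper r m hr
  · intro hmr
    exact (Ideal.pow_le_pow_right hmr).trans (Ideal.le_comap_map)
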